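/- Let f: ℝᴺ × ℝⁿ → ℝ be such that p ↦ f(p, x) is μ-strongly convex on the unit simplex Δ for each parameter x, and x ↦ f(p, x) is L-Lipschitz uniformly in p ∈ Δ. Let p*(x) = argmin_{p ∈ Δ} f(p, x). Then p* is Hölder continuous with exponent 1/2: ‖p*(x) - p*(y)‖ ≤ 2·√(L/μ)·√(‖x - y‖) for all x, y. -/

import Mathlib

/-- If `p ↦ f(p,x)` is `μ`-strongly convex on the unit simplex `Δ` and
`x ↦ f(p,x)` is `L`-Lipschitz uniformly in `p ∈ Δ`, then the minimizer map
`p*(x) = argmin_{p ∈ Δ} f(p,x)` is `1/2`-Hölder: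
`‖p*(x) - p*(y)‖ ≤ 2√(L/μ)·√‖x - y‖`. -/
theorem argmin_holder_half {N n : ℕ}
    (f : EuclideanSpace ℝ (Fin N) → EuclideanSpace ℝ (Fin n) → ℝ)
    (μ L : ℝ) (hμ : 0 < μ) (hL : 0 ≤ L)
    (Δ : Set (EuclideanSpace ℝ (Fin N)))
    (hΔ : Δ = {p : EuclideanSpace ℝ (Fin N) | (∀ i, 0 ≤ p i) ∧ ∑ i, p i = 1})
    (hsc : ∀ x, ∀ p ∈ Δ, ∀ q ∈ Δ, ∀ t ∈ Set.Icc (0 : ℝ) 1,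
      f (t • q + (1 - t) • p) x ≤
        t * f q x + (1 - t) * f p x - μ / 2 * (t * (1 - t)) * ‖p - q‖ ^ 2)
    (hLip : ∀ p ∈ Δ, ∀ x y, |f p x - f p y| ≤ L * ‖x - y‖)
    (pstar : EuclideanSpace ℝ (Fin n) → EuclideanSpace ℝ (Fin N))
    (hmem : ∀ x, pstar x ∈ Δ)
    (hmin : ∀ x, IsMinOn (fun p => f p x) Δ (pstar x)) :
    ∀ x y, ‖pstar x - pstar y‖ ≤ 2 * Real.sqrt (L / μ) * Real.sqrt ‖x - y‖ := by
  intro x y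
  set px := pstar x with hpx
  set py := pstar y with hpy
  have hpxΔ := hmem x
  have hpyΔ := hmem y
  -- the midpoint is in Δ
  have hhalf : (1/2 : ℝ) ∈ Set.Icc (0:ℝ) 1 := by constructor <;> norm_num
  have hmΔ : (1/2 : ℝ) • py + (1 - 1/2 : ℝ) • px ∈ Δ := by
    rw [hΔ]
    rw [hΔ] at hpxΔ hpyΔ
    obtain ⟨hx1, hx2⟩ := hpxΔ
    obtain ⟨hy1, hy2⟩ := hpyΔ
    constructor
    · intro i
      have : ((1/2 : ℝ) • py + (1 - 1/2 : ℝ) • px) i = (1/2) * py i + (1/2) * px i := by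
        simp only [PiLp.add_apply, PiLp.smul_apply, smul_eq_mul]
        norm_num
      rw [this]
      have := hx1 i
      have := hy1 i
      nlinarith
    · have : ∀ i, ((1/2 : ℝ) • py + (1 - 1/2 : ℝ) • px) i = (1/2) * py i + (1/2) * px i := by
        intro i
        simp only [PiLp.add_apply, PiLp.smul_apply, smul_eq_mul]
        norm_num
      simp only [this, Finset.sum_add_distrib, ← Finset.mul_sum, show ∑ i, px i = 1 from hx2, show ∑ i, py i = 1 from hy2]
      norm_num
  have hmΔ' : (1/2 : ℝ) • px + (1 - 1/2 : ℝ) • py ∈ Δ := by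
    have : (1/2 : ℝ) • px + (1 - 1/2 : ℝ) • py = (1/2 : ℝ) • py + (1 - 1/2 : ℝ) • px := by
      norm_num; exact add_comm _ _
    rw [this]; exact hmΔ
  -- strong convexity at x
  have h1 := hsc x px hpxΔ py hpyΔ (1/2) hhalf
  have h2 := hsc y py hpyΔ px hpxΔ (1/2) hhalf
  have hmin1 := hmin x hmΔ
  have hmin2 := hmin y hmΔ'
  simp only [IsMinOn, IsMinFilter] at hmin1 hmin2
  have hnorm : ‖py - px‖ = ‖px - py‖ := by rw [← norm_neg]; congr 1; abel
  have key1 : μ / 8 * ‖px - py‖ ^ 2 ≤ 1/2 * f py x - 1/2 * f px x := by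
    have := hmin x hmΔ
    have hle : f px x ≤ f ((1/2 : ℝ) • py + (1 - 1/2 : ℝ) • px) x := this
    nlinarith [h1]
  have key2 : μ / 8 * ‖px - py‖ ^ 2 ≤ 1/2 * f px y - 1/2 * f py y := by
    have := hmin y hmΔ'
    have hle : f py y ≤ f ((1/2 : ℝ) • px + (1 - 1/2 : ℝ) • py) y := this
    rw [hnorm] at h2
    nlinarith [h2]
  have lip1 : f py x - f py y ≤ L * ‖x - y‖ := by
    have := hLip py hpyΔ x y
    exact le_trans (le_abs_self _) this
  have lip2 : f px y - f px x ≤ L * ‖x - y‖ := by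
    have := hLip px hpxΔ y x
    have h' : ‖y - x‖ = ‖x - y‖ := by rw [← norm_neg]; congr 1; abel
    rw [h'] at this
    exact le_trans (le_abs_self _) this
  have keysq : ‖px - py‖ ^ 2 ≤ 4 * (L / μ) * ‖x - y‖ := by
    have h : μ / 4 * ‖px - py‖ ^ 2 ≤ L * ‖x - y‖ := by nlinarith
    have heq : 4 * (L / μ) * ‖x - y‖ = 4 * L * ‖x - y‖ / μ := by ring
    rw [heq, le_div_iff₀ hμ]
    nlinarith
  -- take square roots
  have hrhs : 0 ≤ 4 * (L / μ) * ‖x - y‖ := by positivity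
  calc ‖px - py‖ = Real.sqrt (‖px - py‖ ^ 2) := by
        rw [Real.sqrt_sq (norm_nonneg _)]
    _ ≤ Real.sqrt (4 * (L / μ) * ‖x - y‖) := Real.sqrt_le_sqrt keysq
    _ = 2 * Real.sqrt (L / μ) * Real.sqrt ‖x - y‖ := by
        rw [Real.sqrt_mul (by positivity), Real.sqrt_mul (by norm_num),
          show (4:ℝ) = 2^2 by norm_num, Real.sqrt_sq (by norm_num)]
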